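/- arXiv:1602.06755 — 2 statements merged into one kernel-verified Lean document; each statement's English description precedes it below -/
import Mathlib

section
/- Let $X$ be a metric space and $c:[a,b]\to X$ an absolutely continuous rectifiable curve with length function $s\in W^{1,1}([a,b])$. Then for almost every $t\in[a,b]$, $s'(t)=\lim_{\epsilon\to 0}\frac{d(c(t),c(t+\epsilon))}{|\epsilon|}$, and $\ell(c)=\int_a^b s'(t)\,dt$. -/
open Set MeasureTheory Filter Topology
open scoped ENNReal NNReal

/-- The length of a curve `c` on a set `s`, as the (extended) total variation. -/
noncomputable def curveLength {X : Type*} [MetricSpace X] (c : ℝ → X) (s : Set ℝ) : ℝ≥0∞ :=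
  eVariationOn c s

theorem mono_hasDerivAt_nonneg {f : ℝ → ℝ} (hf : Monotone f) {x v : ℝ} (h : HasDerivAt f v x) :
    0 ≤ v := by
  have T : Tendsto (slope f x) (𝓝[>] x) (𝓝 v) :=
    (hasDerivAt_iff_tendsto_slope.1 h).mono_left (nhdsGT_le_nhdsNE x)
  refine ge_of_tendsto T ?_
  filter_upwards [self_mem_nhdsWithin] with y hy
  rw [slope_def_field]
  exact div_nonneg (sub_nonneg.2 (hf (le_of_lt hy))) (sub_nonneg.2 (le_of_lt hy))

theorem ae_hasDerivAt_of_integral {F g : ℝ → ℝ} (hg : Integrable g)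
    (hF : ∀ t u : ℝ, t ≤ u → F u - F t = ∫ x in Set.Ioc t u, g x) :
    ∀ᵐ x, HasDerivAt F (g x) x := by
  filter_upwards [(IsUnifLocDoublingMeasure.vitaliFamily (volume : Measure ℝ) 1).ae_tendsto_average
    hg.locallyIntegrable] with x hx
  have vol_Icc : ∀ p q : ℝ, p < q → (volume (Icc p q)).toReal = q - p := by
    intro p q hpq
    rw [Real.volume_Icc, ENNReal.toReal_ofReal (by linarith)]
  have R : Tendsto (slope F x) (𝓝[>] x) (𝓝 (g x)) := by
    apply Tendsto.congr' _ (hx.comp (Real.tendsto_Icc_vitaliFamily_right x))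
    filter_upwards [self_mem_nhdsWithin] with y (hy : x < y)
    have : F y - F x = ∫ r in Icc x y, g r := by
      rw [hF x y hy.le, setIntegral_congr_set Ioc_ae_eq_Icc]
    simp only [Function.comp_apply, setAverage_eq, measureReal_def, slope_def_field, div_eq_inv_mul, this,
      vol_Icc x y hy, smul_eq_mul]
  have L : Tendsto (slope F x) (𝓝[<] x) (𝓝 (g x)) := by
    apply Tendsto.congr' _ (hx.comp (Real.tendsto_Icc_vitaliFamily_left x))
    filter_upwards [self_mem_nhdsWithin] with y (hy : y < x)
    have : F x - F y = ∫ r in Icc y x, g r := by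
      rw [hF y x hy.le, setIntegral_congr_set Ioc_ae_eq_Icc]
    have h1 : slope F x y = (F x - F y) / (x - y) := by
      rw [slope_def_field]
      rw [div_eq_div_iff (by linarith) (by linarith)]
      ring
    simp only [Function.comp_apply, setAverage_eq, measureReal_def, h1, this, div_eq_inv_mul,
      vol_Icc y x hy, smul_eq_mul]
  rw [hasDerivAt_iff_tendsto_slope, ← nhdsLT_sup_nhdsGT, tendsto_sup]
  exact ⟨L, R⟩

theorem aux_ofReal_le_lintegral {F g : ℝ → ℝ} (hg : Integrable g) (hg0 : 0 ≤ᵐ[volume] g)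
    (hF : ∀ t u : ℝ, t ≤ u → F u - F t = ∫ x in Set.Ioc t u, g x)
    (d : ℝ → ℝ) (hmono : Monotone (fun y => F y - d y)) (hcont : Continuous (fun y => F y - d y))
    {t u : ℝ} (htu : t ≤ u) :
    ENNReal.ofReal (d u - d t) ≤ ∫⁻ x in Icc t u, ENNReal.ofReal |deriv d x| := by
  set φ : ℝ → ℝ := fun y => F y - d y with hφ
  rcases le_or_gt (d u - d t) 0 with h0 | h0
  · simpa [ENNReal.ofReal_eq_zero.2 h0] using zero_le _
  -- Stieltjes function associated to φ
  set S : StieltjesFunction ℝ := ⟨φ, hmono, fun x => (hcont.continuousAt).continuousWithinAt⟩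
    with hS
  have hSφ : ∀ y, S y = φ y := fun y => rfl
  -- a.e. derivative facts
  have hderiv : ∀ᵐ x, HasDerivAt d (deriv d x) x ∧
      deriv d x = g x - deriv φ x ∧
      ENNReal.ofReal (deriv φ x) ≤ Measure.rnDeriv S.measure volume x := by
    filter_upwards [S.ae_hasDerivAt, ae_hasDerivAt_of_integral hg hF] with x hx1 hx2
    have hφx : HasDerivAt φ ((Measure.rnDeriv S.measure volume x).toReal) x := hx1
    have hφd : deriv φ x = (Measure.rnDeriv S.measure volume x).toReal := hφx.deriv
    have hdx : HasDerivAt d (g x - deriv φ x) x := by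
      have h1 : HasDerivAt (fun y => F y - φ y) (g x - deriv φ x) x := by
        rw [hφd]; exact hx2.sub hφx
      have h2 : (fun y => F y - φ y) = d := by funext y; simp [hφ]
      rwa [h2] at h1
    refine ⟨?_, hdx.deriv, ?_⟩
    · rw [hdx.deriv]; exact hdx
    · rw [hφd]; exact ENNReal.ofReal_toReal_le
  set A := ∫⁻ x in Icc t u, ENNReal.ofReal (deriv φ x) with hA
  have hA_le : A ≤ ENNReal.ofReal (φ u - φ t) := by
    calc A ≤ ∫⁻ x in Icc t u, Measure.rnDeriv S.measure volume x :=
          lintegral_mono_ae (ae_restrict_of_ae (hderiv.mono fun x hx => hx.2.2))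
      _ = (volume.withDensity (Measure.rnDeriv S.measure volume)) (Icc t u) :=
          (withDensity_apply _ measurableSet_Icc).symm
      _ ≤ S.measure (Icc t u) := Measure.le_iff'.1 (Measure.withDensity_rnDeriv_le _ _) _
      _ = ENNReal.ofReal (φ u - Function.leftLim φ t) := S.measure_Icc t u
      _ = ENNReal.ofReal (φ u - φ t) := by
          rw [leftLim_eq_of_tendsto
            ((hcont.tendsto t).mono_left nhdsWithin_le_nhds)]
  have hAfin : A ≠ ⊤ := (lt_of_le_of_lt hA_le ENNReal.ofReal_lt_top).ne
  have hstep : ENNReal.ofReal (d u - d t) + A ≤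
      A + ∫⁻ x in Icc t u, ENNReal.ofReal |deriv d x| := by
    calc ENNReal.ofReal (d u - d t) + A
        ≤ ENNReal.ofReal (d u - d t) + ENNReal.ofReal (φ u - φ t) := add_le_add_right hA_le _
      _ = ENNReal.ofReal ((d u - d t) + (φ u - φ t)) :=
          (ENNReal.ofReal_add h0.le (sub_nonneg.2 (hmono htu))).symm
      _ = ENNReal.ofReal (F u - F t) := by congr 1; simp only [hφ]; ring
      _ = ∫⁻ x in Ioc t u, ENNReal.ofReal (g x) := by
          rw [hF t u htu, ofReal_integral_eq_lintegral_ofReal hg.integrableOn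
            (ae_restrict_of_ae hg0)]
      _ = ∫⁻ x in Icc t u, ENNReal.ofReal (g x) := setLIntegral_congr Ioc_ae_eq_Icc
      _ ≤ ∫⁻ x in Icc t u, (ENNReal.ofReal (deriv φ x) + ENNReal.ofReal |deriv d x|) := by
          refine lintegral_mono_ae (ae_restrict_of_ae (hderiv.mono fun x hx => ?_))
          have : g x ≤ deriv φ x + |deriv d x| := by
            have h1 : g x = deriv φ x + deriv d x := by rw [hx.2.1]; ring
            rw [h1]; gcongr; exact le_abs_self _
          exact le_trans (ENNReal.ofReal_le_ofReal this) (ENNReal.ofReal_add_le)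
      _ = A + ∫⁻ x in Icc t u, ENNReal.ofReal |deriv d x| :=
          lintegral_add_left ((measurable_deriv φ).ennreal_ofReal) _
  rw [add_comm A _] at hstep
  exact (ENNReal.add_le_add_iff_right hAfin).1 hstep



/-- If `c : [a,b] → X` is an absolutely continuous rectifiable curve, i.e.
its length function `s(t) = ℓ(c|_{[a,t]})` is in `W^{1,1}([a,b])` (formalized: `s` has an
integrable density `s'` with `s t = ∫_a^t s'`), then for almost every `t ∈ [a,b]` the
metric derivative `lim_{ε→0} d(c(t), c(t+ε))/|ε|` exists and equals `s'(t)`, and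
`ℓ(c) = ∫_a^b s'(t) dt`. -/
theorem abs_continuous_curve_metric_derivative
    {X : Type*} [MetricSpace X] (a b : ℝ) (hab : a ≤ b) (c : ℝ → X)
    (hc : ContinuousOn c (Icc a b))
    (hrect : curveLength c (Icc a b) < ⊤)
    (s : ℝ → ℝ) (hs : ∀ t ∈ Icc a b, s t = (curveLength c (Icc a t)).toReal)
    (s' : ℝ → ℝ) (hs'int : IntegrableOn s' (Icc a b))
    (hac : ∀ t ∈ Icc a b, s t = ∫ r in a..t, s' r) :
    (∀ᵐ t ∂(volume.restrict (Icc a b)),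
        Tendsto (fun ε : ℝ => dist (c t) (c (t + ε)) / |ε|) (𝓝[≠] 0) (𝓝 (s' t))) ∧
      curveLength c (Icc a b) = ENNReal.ofReal (∫ t in a..b, s' t) := by
  have hrect' : eVariationOn c (Icc a b) < ⊤ := hrect
  set g : ℝ → ℝ := (Icc a b).indicator s' with hgdef
  have hg : Integrable g := (integrable_indicator_iff measurableSet_Icc).2 hs'int
  set F : ℝ → ℝ := fun t => ∫ r in a..t, g r with hFdef
  have hgiI : ∀ p q : ℝ, IntervalIntegrable g volume p q := fun p q => hg.intervalIntegrable
  have hF : ∀ t u : ℝ, t ≤ u → F u - F t = ∫ x in Set.Ioc t u, g x := by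
    intro t u htu
    rw [hFdef]
    simp only
    rw [intervalIntegral.integral_interval_sub_left (hgiI a u) (hgiI a t),
      intervalIntegral.integral_of_le htu]
  have hind : ∀ A : Set ℝ, ∫ x in A, g x = ∫ x in A ∩ Icc a b, s' x := fun A => by
    rw [hgdef, setIntegral_indicator measurableSet_Icc]
  -- monotonicity of s on Icc a b
  have hsmono : MonotoneOn s (Icc a b) := by
    intro t ht u hu htu
    rw [hs t ht, hs u hu]
    refine ENNReal.toReal_mono ?_ (eVariationOn.mono c (Icc_subset_Icc_right htu))
    exact ((eVariationOn.mono c (Icc_subset_Icc_right hu.2)).trans_lt hrect').ne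
  -- F t = s t on Icc a b
  have hFs : ∀ t ∈ Icc a b, F t = s t := by
    intro t ht
    have hFa : F a = 0 := by simp [hFdef]
    have h1 : F t - F a = ∫ x in Ioc a t, g x := hF a t ht.1
    have hsubset : Ioc a t ⊆ Icc a b := fun x hx =>
      ⟨(mem_Ioc.1 hx).1.le, (mem_Ioc.1 hx).2.trans ht.2⟩
    rw [hind, inter_eq_self_of_subset_left hsubset, hFa, sub_zero] at h1
    rw [h1, ← intervalIntegral.integral_of_le ht.1, ← hac t ht]
  -- F is constant off [a,b] under clamping, and monotone
  have hnull : ∀ t u : ℝ, u ⊓ b < t ⊔ a → ∫ x in Ioc t u ∩ Icc a b, s' x = 0 := by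
    intro t u h
    have hz : volume (Ioc t u ∩ Icc a b) = 0 := by
      refine measure_mono_null (t := {a}) (fun x hx => ?_) Real.volume_singleton
      have h1 : x ≤ u ⊓ b := le_inf hx.1.2 hx.2.2
      have h2 : ¬(t ⊔ a < x) := fun hc => absurd (hc.trans_le h1) (not_lt.2 h.le)
      rw [sup_lt_iff, not_and_or] at h2
      rcases h2 with h2 | h2
      · exact absurd hx.1.1 h2
      · exact mem_singleton_iff.2 (le_antisymm (not_lt.1 h2) hx.2.1)
    rw [Measure.restrict_eq_zero.2 hz, integral_zero_measure]
  have hs'ii : ∀ p q, p ∈ Icc a b → q ∈ Icc a b → IntervalIntegrable s' volume p q := by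
    intro p q hp hq
    exact (hs'int.mono_set (uIcc_subset_Icc hp hq)).intervalIntegrable
  have hsub_eq : ∀ t u : ℝ, t ⊔ a ≤ u ⊓ b →
      ∫ x in Ioc t u ∩ Icc a b, s' x = s (u ⊓ b) - s (t ⊔ a) := by
    intro t u h
    have h1 : t ⊔ a ∈ Icc a b := ⟨le_sup_right, h.trans inf_le_right⟩
    have h2 : u ⊓ b ∈ Icc a b := ⟨h1.1.trans h, inf_le_right⟩
    have hAB : (Ioc t u ∩ Icc a b : Set ℝ) =ᵐ[volume] Ioc (t ⊔ a) (u ⊓ b) := by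
      rw [Filter.eventuallyEq_set]
      have hBsub : Ioc (t ⊔ a) (u ⊓ b) ⊆ Ioc t u ∩ Icc a b := by
        rintro x ⟨hx1, hx2⟩
        exact ⟨⟨(le_sup_left.trans_lt hx1), hx2.trans inf_le_left⟩,
          ⟨(le_sup_right.trans hx1.le), hx2.trans inf_le_right⟩⟩
      have hdiff : (Ioc t u ∩ Icc a b) \ Ioc (t ⊔ a) (u ⊓ b) ⊆ {a} := by
        rintro x ⟨hx, hx'⟩
        have hle : x ≤ u ⊓ b := le_inf hx.1.2 hx.2.2
        simp only [mem_Ioc, not_and_or, not_lt, not_le] at hx'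
        rcases hx' with h' | h'
        · rcases le_sup_iff.1 h' with h'' | h''
          · exact absurd hx.1.1 (not_lt.2 h'')
          · exact mem_singleton_iff.2 (le_antisymm h'' hx.2.1)
        · exact absurd hle (not_le.2 h')
      have : volume ((Ioc t u ∩ Icc a b) \ Ioc (t ⊔ a) (u ⊓ b)) = 0 :=
        measure_mono_null hdiff Real.volume_singleton
      filter_upwards [measure_eq_zero_iff_ae_notMem.1 this] with x hx
      constructor
      · intro hxA
        by_contra hxB
        exact hx ⟨hxA, hxB⟩
      · exact fun hxB => hBsub hxB
    rw [setIntegral_congr_set hAB, ← intervalIntegral.integral_of_le h,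
      ← intervalIntegral.integral_interval_sub_left (hs'ii a (u ⊓ b) ⟨le_rfl, hab⟩ h2)
        (hs'ii a (t ⊔ a) ⟨le_rfl, hab⟩ h1), ← hac _ h2, ← hac _ h1]
  have hmonoF : Monotone F := by
    intro t u htu
    rw [← sub_nonneg, hF t u htu, hind]
    rcases le_or_gt (t ⊔ a) (u ⊓ b) with h | h
    · rw [hsub_eq t u h]
      have h1 : t ⊔ a ∈ Icc a b := ⟨le_sup_right, h.trans inf_le_right⟩
      have h2 : u ⊓ b ∈ Icc a b := ⟨h1.1.trans h, inf_le_right⟩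
      linarith [hsmono h1 h2 h]
    · rw [hnull t u h]
  -- distance bound via total variation
  have hdistF : ∀ t u : ℝ, t ∈ Icc a b → u ∈ Icc a b → t ≤ u →
      dist (c t) (c u) ≤ F u - F t := by
    intro t u ht hu htu
    have e1 : eVariationOn c (Icc a t) + eVariationOn c (Icc t u) = eVariationOn c (Icc a u) := by
      have h0 := eVariationOn.Icc_add_Icc c (s := Icc a u) ht.1 htu ⟨ht.1, htu⟩
      rwa [inter_eq_self_of_subset_right (Icc_subset_Icc_right htu),
        inter_eq_self_of_subset_right (Icc_subset_Icc_left ht.1), inter_self] at h0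
    have finu : eVariationOn c (Icc a u) ≠ ⊤ :=
      ((eVariationOn.mono c (Icc_subset_Icc_right hu.2)).trans_lt hrect').ne
    have fint : eVariationOn c (Icc a t) ≠ ⊤ :=
      ((eVariationOn.mono c (Icc_subset_Icc_right ht.2)).trans_lt hrect').ne
    have finm : eVariationOn c (Icc t u) ≠ ⊤ := by
      intro hcon
      rw [← e1, hcon] at finu
      simp at finu
    have e2 : F u - F t = (eVariationOn c (Icc t u)).toReal := by
      rw [hFs t ht, hFs u hu, hs t ht, hs u hu]
      have : (eVariationOn c (Icc a u)).toReal
          = (eVariationOn c (Icc a t)).toReal + (eVariationOn c (Icc t u)).toReal := by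
        rw [← ENNReal.toReal_add fint finm, e1]
      show (curveLength c (Icc a u)).toReal - (curveLength c (Icc a t)).toReal = _
      rw [show curveLength c (Icc a u) = eVariationOn c (Icc a u) from rfl,
        show curveLength c (Icc a t) = eVariationOn c (Icc a t) from rfl, this]
      ring
    rw [e2, dist_edist]
    exact ENNReal.toReal_mono finm
      (eVariationOn.edist_le c (Set.mem_Icc.2 ⟨le_rfl, htu⟩) (Set.mem_Icc.2 ⟨htu, le_rfl⟩))
  -- clamping
  set cl : ℝ → ℝ := fun t => a ⊔ (t ⊓ b) with hcldef
  have hclmem : ∀ t, cl t ∈ Icc a b := fun t => ⟨le_sup_left, sup_le hab inf_le_right⟩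
  have hcl_eq : ∀ t ∈ Icc a b, cl t = t := by
    intro t ht
    rw [hcldef]
    simp only
    rw [inf_eq_left.2 ht.2, sup_eq_right.2 ht.1]
  have hclmono : Monotone cl := fun t u htu => sup_le_sup_left (inf_le_inf_right b htu) a
  have hclcont : Continuous cl := continuous_const.sup (continuous_id.inf continuous_const)
  have hccl : Continuous fun t => c (cl t) := hc.comp_continuous hclcont hclmem
  have hFcl : ∀ t, F (cl t) = F t := by
    intro t
    rcases le_total t a with h | h
    · have h1 : cl t = a := by
        rw [hcldef]; simp only
        rw [sup_eq_left]
        exact inf_le_left.trans h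
      rw [h1]
      have h2 : F a - F t = 0 := by
        rw [hF t a h, hind]
        have hz : volume (Ioc t a ∩ Icc a b) = 0 := by
          refine measure_mono_null (t := {a}) (fun x hx => ?_) Real.volume_singleton
          exact mem_singleton_iff.2 (le_antisymm hx.1.2 hx.2.1)
        rw [Measure.restrict_eq_zero.2 hz, integral_zero_measure]
      linarith
    · rcases le_total b t with h' | h'
      · have h1 : cl t = b := by
          rw [hcldef]; simp only
          rw [inf_eq_right.2 h', sup_eq_right.2 hab]
        rw [h1]
        have h2 : F t - F b = 0 := by
          rw [hF b t h', hind]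
          have hz : volume (Ioc b t ∩ Icc a b) = 0 := by
            refine measure_mono_null (t := (∅ : Set ℝ)) (fun x hx => ?_) measure_empty
            exact absurd (hx.1.1.trans_le hx.2.2) (lt_irrefl b)
          rw [Measure.restrict_eq_zero.2 hz, integral_zero_measure]
        linarith
      · rw [hcl_eq t ⟨h, h'⟩]
  -- dense sequence in the image
  have himg : TopologicalSpace.IsSeparable (c '' Icc a b) := (isCompact_Icc.image_of_continuousOn hc).isSeparable
  obtain ⟨T, Tc, hTsub⟩ := himg
  have hTne : T.Nonempty := by
    rcases T.eq_empty_or_nonempty with h | h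
    · exfalso
      have : c a ∈ closure T := hTsub ⟨a, ⟨le_rfl, hab⟩, rfl⟩
      rw [h, closure_empty] at this
      exact this
    · exact h
  obtain ⟨x, hxT⟩ := Set.Countable.exists_eq_range Tc hTne
  set d : ℕ → ℝ → ℝ := fun i t => dist (c (cl t)) (x i) with hddef
  have hdcont : ∀ i, Continuous (d i) := fun i => hccl.dist continuous_const
  have hdlip : ∀ i t u, t ≤ u → |d i u - d i t| ≤ F u - F t := by
    intro i t u htu
    have h1 : |d i u - d i t| ≤ dist (c (cl t)) (c (cl u)) := by
      rw [dist_comm]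
      exact abs_dist_sub_le _ _ _
    have h2 := hdistF (cl t) (cl u) (hclmem t) (hclmem u) (hclmono htu)
    rw [hFcl t, hFcl u] at h2
    linarith
  have hqmono : ∀ i, Monotone fun y => F y - d i y := by
    intro i t u htu
    have := (abs_le.1 (hdlip i t u htu)).2
    simp only
    linarith
  have hpmono : ∀ i, Monotone fun y => F y + d i y := by
    intro i t u htu
    have := (abs_le.1 (hdlip i t u htu)).1
    simp only
    linarith
  -- derivative events
  have hFae : ∀ᵐ y, HasDerivAt F (g y) y := ae_hasDerivAt_of_integral hg hF
  have hg0 : 0 ≤ᵐ[volume] g := by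
    filter_upwards [hFae] with y hy using mono_hasDerivAt_nonneg hmonoF hy
  set D : ℕ → ℝ → ℝ := fun i => deriv (d i) with hDdef
  have hEv : ∀ᵐ y, HasDerivAt F (g y) y ∧ 0 ≤ g y ∧
      ∀ i, HasDerivAt (d i) (D i y) y ∧ |D i y| ≤ g y := by
    have hQ : ∀ᵐ y, ∀ i, DifferentiableAt ℝ (fun z => F z - d i z) y :=
      ae_all_iff.2 fun i => (hqmono i).ae_differentiableAt
    have hP : ∀ᵐ y, ∀ i, DifferentiableAt ℝ (fun z => F z + d i z) y :=
      ae_all_iff.2 fun i => (hpmono i).ae_differentiableAt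
    filter_upwards [hFae, hg0, hQ, hP] with y hyF hyg hyQ hyP
    refine ⟨hyF, hyg, fun i => ?_⟩
    have hq' : HasDerivAt (fun z => F z - d i z) (deriv (fun z => F z - d i z) y) y :=
      (hyQ i).hasDerivAt
    have hdy : HasDerivAt (d i) (g y - deriv (fun z => F z - d i z) y) y := by
      have h1 : HasDerivAt (fun z => F z - (F z - d i z))
          (g y - deriv (fun z => F z - d i z) y) y := hyF.sub hq'
      have h2 : (fun z => F z - (F z - d i z)) = d i := by funext z; ring
      rwa [h2] at h1
    have hDval : D i y = g y - deriv (fun z => F z - d i z) y := hdy.deriv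
    have hq0 : 0 ≤ deriv (fun z => F z - d i z) y :=
      mono_hasDerivAt_nonneg (hqmono i) hq'
    have hp' : HasDerivAt (fun z => F z + d i z) (g y + D i y) y := by
      have := hyF.add (hDval ▸ hdy)
      exact this
    have hp0 : 0 ≤ g y + D i y := mono_hasDerivAt_nonneg (hpmono i) hp'
    refine ⟨hDval ▸ hdy, abs_le.2 ⟨by linarith, by rw [hDval]; linarith⟩⟩
  set m : ℝ → ℝ≥0∞ := fun y => ⨆ i, ENNReal.ofReal |D i y| with hmdef
  have hmmeas : Measurable m :=
    Measurable.iSup fun i => ((measurable_deriv (d i)).abs).ennreal_ofReal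
  have hmg : ∀ᵐ y, m y ≤ ENNReal.ofReal (g y) := by
    filter_upwards [hEv] with y hy
    exact iSup_le fun i => ENNReal.ofReal_le_ofReal ((hy.2.2 i).2.trans (le_abs_self _) |>.trans
      (abs_of_nonneg hy.2.1).le)
  -- per-index increment bound
  have hincr : ∀ i, ∀ t u : ℝ, t ≤ u →
      ENNReal.ofReal |d i u - d i t| ≤ ∫⁻ y in Icc t u, m y := by
    intro i t u htu
    have h1 : ENNReal.ofReal (d i u - d i t) ≤ ∫⁻ y in Icc t u, ENNReal.ofReal |deriv (d i) y| :=
      aux_ofReal_le_lintegral hg hg0 hF (d i) (hqmono i)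
        ((intervalIntegral.continuous_primitive (fun p q => hgiI p q) a).sub (hdcont i)) htu
    have h2 : ENNReal.ofReal (d i t - d i u) ≤
        ∫⁻ y in Icc t u, ENNReal.ofReal |deriv (d i) y| := by
      have h3 : Monotone fun y => F y - (fun z => -(d i z)) y := by
        simpa [sub_neg_eq_add] using hpmono i
      have h4 : Continuous fun y => F y - (fun z => -(d i z)) y := by
        simpa [sub_neg_eq_add, Pi.add_def] using
          ((intervalIntegral.continuous_primitive (fun p q => hgiI p q) a).add (hdcont i))
      have h5 := aux_ofReal_le_lintegral hg hg0 hF (fun z => -(d i z)) h3 h4 htu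
      simp only [neg_sub_neg] at h5
      refine h5.trans (lintegral_mono fun y => ?_)
      rw [show deriv (fun z => -(d i z)) y = -(deriv (d i) y) by
        simpa using deriv.neg (f := d i) (x := y), abs_neg]
    have hle : ∫⁻ y in Icc t u, ENNReal.ofReal |deriv (d i) y| ≤ ∫⁻ y in Icc t u, m y := by
      refine lintegral_mono fun y => ?_
      exact le_iSup (fun j => ENNReal.ofReal |D j y|) i
    rcases abs_cases (d i u - d i t) with ⟨he, _⟩ | ⟨he, _⟩
    · rw [he]; exact h1.trans hle
    · rw [he]
      refine le_trans ?_ (h2.trans hle)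
      rw [neg_sub]
  -- edist bound via density
  have hstep9 : ∀ t u : ℝ, t ∈ Icc a b → u ∈ Icc a b → t ≤ u →
      edist (c t) (c u) ≤ ∫⁻ y in Icc t u, m y := by
    intro t u ht hu htu
    refine ENNReal.le_of_forall_pos_le_add fun ε hε _ => ?_
    have hcu : c u ∈ closure T := hTsub ⟨u, hu, rfl⟩
    have hε2 : (0 : ℝ) < ε / 2 := by positivity
    obtain ⟨p, hpT, hp⟩ := Metric.mem_closure_iff.1 hcu (ε / 2) hε2
    obtain ⟨i, rfl⟩ : ∃ i, x i = p := by
      rw [hxT] at hpT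
      obtain ⟨i, hi⟩ := hpT
      exact ⟨i, hi⟩
    have hdt : d i t = dist (c t) (x i) := by rw [hddef]; simp only; rw [hcl_eq t ht]
    have hdu : d i u = dist (c u) (x i) := by rw [hddef]; simp only; rw [hcl_eq u hu]
    have key : dist (c t) (c u) ≤ |d i u - d i t| + (ε : ℝ) := by
      have t1 : dist (c t) (c u) ≤ d i t + dist (c u) (x i) := by
        rw [hdt]
        calc dist (c t) (c u) ≤ dist (c t) (x i) + dist (x i) (c u) := dist_triangle _ _ _
          _ = dist (c t) (x i) + dist (c u) (x i) := by rw [dist_comm (x i)]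
      have t2 : d i t ≤ |d i u - d i t| + d i u := by
        have := le_abs_self (d i t - d i u)
        have h3 : |d i t - d i u| = |d i u - d i t| := abs_sub_comm _ _
        linarith [le_abs_self (d i t - d i u), h3 ▸ le_abs_self (d i t - d i u)]
      have t3 : d i u = dist (c u) (x i) := hdu
      have t4 : dist (c u) (x i) < ε / 2 := hp
      have : (ε : ℝ) = ε / 2 + ε / 2 := by ring
      nlinarith [dist_nonneg (x := c u) (y := x i)]
    calc edist (c t) (c u) = ENNReal.ofReal (dist (c t) (c u)) := edist_dist _ _
      _ ≤ ENNReal.ofReal (|d i u - d i t| + (ε : ℝ)) := ENNReal.ofReal_le_ofReal key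
      _ ≤ ENNReal.ofReal |d i u - d i t| + ENNReal.ofReal (ε : ℝ) := ENNReal.ofReal_add_le
      _ ≤ (∫⁻ y in Icc t u, m y) + ε := by
          gcongr
          · exact hincr i t u htu
          · rw [ENNReal.ofReal_coe_nnreal]
  -- total variation bound
  have hvar : eVariationOn c (Icc a b) ≤ ∫⁻ y in Icc a b, m y := by
    unfold eVariationOn
    refine iSup_le ?_
    rintro ⟨n, u, hu, us⟩
    have hIoc : ∀ p q : ℝ, ∫⁻ y in Icc p q, m y = ∫⁻ y in Ioc p q, m y :=
      fun p q => (setLIntegral_congr Ioc_ae_eq_Icc).symm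
    have claim : ∀ k : ℕ, ∑ j ∈ Finset.range k, edist (c (u (j + 1))) (c (u j)) ≤
        ∫⁻ y in Icc (u 0) (u k), m y := by
      intro k
      induction k with
      | zero => simp
      | succ k ih =>
        rw [Finset.sum_range_succ]
        have h1 : edist (c (u (k + 1))) (c (u k)) ≤ ∫⁻ y in Icc (u k) (u (k + 1)), m y := by
          rw [edist_comm]
          exact hstep9 (u k) (u (k + 1)) (us k) (us (k + 1)) (hu (Nat.le_succ k))
        refine (add_le_add ih h1).trans ?_
        rw [hIoc, hIoc, hIoc, ← lintegral_union measurableSet_Ioc (Ioc_disjoint_Ioc_of_le le_rfl),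
          Ioc_union_Ioc_eq_Ioc (hu (Nat.zero_le k)) (hu (Nat.le_succ k))]
    refine (claim n).trans (lintegral_mono' (Measure.restrict_mono ?_ le_rfl) le_rfl)
    exact Icc_subset_Icc (us 0).1 (us n).2
  -- part 2
  have hb' : b ∈ Icc a b := ⟨hab, le_rfl⟩
  have part2 : curveLength c (Icc a b) = ENNReal.ofReal (∫ t in a..b, s' t) := by
    rw [← hac b hb', hs b hb', ENNReal.ofReal_toReal hrect.ne]
  -- lintegral identity and a.e. equality of m with ofReal ∘ g
  have hIcc_int : ∫⁻ y in Icc a b, ENNReal.ofReal (g y) = ENNReal.ofReal (∫ t in a..b, s' t) := by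
    rw [← ofReal_integral_eq_lintegral_ofReal hg.integrableOn (ae_restrict_of_ae hg0)]
    congr 1
    rw [hind, inter_self, intervalIntegral.integral_of_le hab]
    exact (setIntegral_congr_set Ioc_ae_eq_Icc).symm
  have hfin2 : ∫⁻ y in Icc a b, ENNReal.ofReal (g y) ≠ ⊤ := by
    rw [hIcc_int]; exact ENNReal.ofReal_ne_top
  have hle12 : ∫⁻ y in Icc a b, m y ≤ ∫⁻ y in Icc a b, ENNReal.ofReal (g y) :=
    lintegral_mono_ae (ae_restrict_of_ae hmg)
  have hge : ∫⁻ y in Icc a b, ENNReal.ofReal (g y) ≤ ∫⁻ y in Icc a b, m y := by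
    rw [hIcc_int, ← part2]; exact hvar
  have hI : ∫⁻ y in Icc a b, m y = ∫⁻ y in Icc a b, ENNReal.ofReal (g y) :=
    le_antisymm hle12 hge
  have hmfin : ∫⁻ y in Icc a b, m y ≠ ⊤ := by rw [hI]; exact hfin2
  have hzero : ∫⁻ y in Icc a b, (ENNReal.ofReal (g y) - m y) = 0 := by
    rw [lintegral_sub hmmeas hmfin (ae_restrict_of_ae hmg), hI, tsub_self]
  have hgae : AEMeasurable g (volume.restrict (Icc a b)) := by
    refine hs'int.aemeasurable.congr ?_
    filter_upwards [ae_restrict_mem measurableSet_Icc] with y hy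
    exact (indicator_of_mem hy s').symm
  have hsubmeas : AEMeasurable (fun y => ENNReal.ofReal (g y) - m y)
      (volume.restrict (Icc a b)) :=
    hgae.ennreal_ofReal.sub hmmeas.aemeasurable
  have hae0 := (lintegral_eq_zero_iff' hsubmeas).1 hzero
  have hmeq : ∀ᵐ y ∂volume.restrict (Icc a b), m y = ENNReal.ofReal (g y) := by
    filter_upwards [hae0, ae_restrict_of_ae hmg] with y h1 h2
    exact le_antisymm h2 (tsub_eq_zero_iff_le.1 h1)
  -- final part
  have hane : ∀ᵐ y : ℝ, y ≠ a := by
    have he : {y : ℝ | ¬ y ≠ a} = {a} := by ext y; simp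
    rw [ae_iff, he]; exact Real.volume_singleton
  have hbne : ∀ᵐ y : ℝ, y ≠ b := by
    have he : {y : ℝ | ¬ y ≠ b} = {b} := by ext y; simp
    rw [ae_iff, he]; exact Real.volume_singleton
  refine ⟨?_, part2⟩
  filter_upwards [ae_restrict_of_ae hEv, hmeq, ae_restrict_mem measurableSet_Icc,
    ae_restrict_of_ae hane, ae_restrict_of_ae hbne] with z hz hmz hzmem hza' hzb'
  obtain ⟨hzF, hzg0, hzd⟩ := hz
  have hza : a < z := lt_of_le_of_ne hzmem.1 (Ne.symm hza')
  have hzb : z < b := lt_of_le_of_ne hzmem.2 hzb'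
  have hgz : g z = s' z := indicator_of_mem hzmem s'
  rw [← hgz]
  have hmap : Tendsto (fun ε : ℝ => z + ε) (𝓝[≠] (0 : ℝ)) (𝓝[≠] z) := by
    refine tendsto_nhdsWithin_of_tendsto_nhds_of_eventually_within _ ?_ ?_
    · have h1 : Tendsto (fun ε : ℝ => z + ε) (𝓝 0) (𝓝 (z + 0)) :=
        tendsto_const_nhds.add tendsto_id
      rw [add_zero] at h1
      exact h1.mono_left nhdsWithin_le_nhds
    · filter_upwards [self_mem_nhdsWithin] with ε hε
      simp only [mem_compl_iff, mem_singleton_iff] at hε ⊢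
      intro h
      exact hε (by linarith)
  have hevm : ∀ᶠ ε in 𝓝[≠] (0 : ℝ), z + ε ∈ Icc a b := by
    have hIoo : Ioo (a - z) (b - z) ∈ 𝓝 (0 : ℝ) := Ioo_mem_nhds (by linarith) (by linarith)
    filter_upwards [mem_nhdsWithin_of_mem_nhds hIoo] with ε hε
    exact ⟨by linarith [hε.1], by linarith [hε.2]⟩
  have habs : ∀ (f : ℝ → ℝ) (v : ℝ), HasDerivAt f v z →
      Tendsto (fun ε : ℝ => |f (z + ε) - f z| / |ε|) (𝓝[≠] 0) (𝓝 |v|) := by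
    intro f v hf
    have h1 : Tendsto (fun ε : ℝ => slope f z (z + ε)) (𝓝[≠] 0) (𝓝 v) :=
      (hasDerivAt_iff_tendsto_slope.1 hf).comp hmap
    refine h1.abs.congr' ?_
    filter_upwards [self_mem_nhdsWithin] with ε hε
    have hε0 : ε ≠ 0 := by simpa using hε
    rw [slope_def_field, add_sub_cancel_left, abs_div]
  have hslopeF : Tendsto (fun ε : ℝ => |F (z + ε) - F z| / |ε|) (𝓝[≠] 0) (𝓝 (g z)) := by
    have := habs F (g z) hzF
    rwa [abs_of_nonneg hzg0] at this
  have hsloped : ∀ i, Tendsto (fun ε : ℝ => |d i (z + ε) - d i z| / |ε|) (𝓝[≠] 0)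
      (𝓝 |D i z|) := fun i => habs (d i) (D i z) (hzd i).1
  refine tendsto_order.2 ⟨?_, ?_⟩
  · intro p hp
    rcases lt_or_ge p 0 with hp0 | hp0
    · filter_upwards with ε
      exact hp0.trans_le (div_nonneg dist_nonneg (abs_nonneg ε))
    · have hofR : ENNReal.ofReal p < m z := by
        rw [hmz]
        exact (ENNReal.ofReal_lt_ofReal_iff (hp0.trans_lt hp)).2 hp
      rw [hmdef] at hofR
      simp only at hofR
      obtain ⟨i, hi⟩ := lt_iSup_iff.1 hofR
      have hpD : p < |D i z| := by
        by_contra hcon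
        push_neg at hcon
        exact absurd (hi.trans_le (ENNReal.ofReal_le_ofReal hcon)) (lt_irrefl _)
      filter_upwards [(hsloped i).eventually (eventually_gt_nhds hpD), hevm,
        self_mem_nhdsWithin] with ε h1 h2 hε
      have hε0 : ε ≠ 0 := by simpa using hε
      have hd1 : |d i (z + ε) - d i z| ≤ dist (c z) (c (z + ε)) := by
        have e1 : d i (z + ε) = dist (c (z + ε)) (x i) := by
          rw [hddef]; simp only; rw [hcl_eq _ h2]
        have e2 : d i z = dist (c z) (x i) := by
          rw [hddef]; simp only; rw [hcl_eq _ hzmem]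
        rw [e1, e2, dist_comm (c z) (c (z + ε))]
        exact abs_dist_sub_le _ _ _
      exact h1.trans_le ((div_le_div_iff_of_pos_right (abs_pos.2 hε0)).2 hd1)
  · intro p hp
    filter_upwards [hslopeF.eventually (eventually_lt_nhds hp), hevm,
      self_mem_nhdsWithin] with ε h1 h2 hε
    have hε0 : ε ≠ 0 := by simpa using hε
    have hdist : dist (c z) (c (z + ε)) ≤ |F (z + ε) - F z| := by
      rcases lt_or_ge 0 ε with h | h
      · exact (hdistF z (z + ε) hzmem h2 (by linarith)).trans (le_abs_self _)
      · have hεlt : ε < 0 := lt_of_le_of_ne h hε0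
        have h3 := hdistF (z + ε) z h2 hzmem (by linarith)
        rw [dist_comm]
        calc dist (c (z + ε)) (c z) ≤ F z - F (z + ε) := h3
          _ ≤ |F (z + ε) - F z| := by rw [abs_sub_comm]; exact le_abs_self _
    exact lt_of_le_of_lt ((div_le_div_iff_of_pos_right (abs_pos.2 hε0)).2 hdist) h1
end

section
/- Let $K$ be a compact connected metric space with $\mathcal H^1(K)<\infty$. Then $K$ is a Peano continuum, i.e. $K$ is locally connected. -/
open Set MeasureTheory Metric
open scoped ENNReal

/-- The 1-dimensional Hausdorff measure of a preconnected set bounds its diameter. -/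
lemma ediam_le_hausdorffMeasure_one {X : Type*} [MetricSpace X] [MeasurableSpace X] [BorelSpace X]
    {s : Set X} (hs : IsPreconnected s) : EMetric.diam s ≤ μH[1] s := by
  refine EMetric.diam_le fun y hy z hz => ?_
  have hf : LipschitzWith 1 (dist y) := LipschitzWith.dist_right y
  have himg : IsPreconnected (dist y '' s) := hs.image _ (hf.continuous.continuousOn)
  have hIcc : Icc (0 : ℝ) (dist y z) ⊆ dist y '' s := by
    refine himg.Icc_subset ⟨y, hy, by simp⟩ ⟨z, hz, rfl⟩
  have himle : μH[1] (dist y '' s) ≤ μH[1] s := by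
    simpa using hf.hausdorffMeasure_image_le zero_le_one s
  calc edist y z = ENNReal.ofReal (dist y z) := edist_dist y z
    _ = volume (Icc (0 : ℝ) (dist y z)) := by rw [Real.volume_Icc]; simp
    _ = μH[1] (Icc (0 : ℝ) (dist y z)) := by rw [MeasureTheory.hausdorffMeasure_real]
    _ ≤ μH[1] (dist y '' s) := measure_mono hIcc
    _ ≤ μH[1] s := himle

/-- Connected components of closed sets in a compact Hausdorff space are closed. -/
lemma isClosed_connectedComponentIn_of_isClosed {X : Type*} [TopologicalSpace X] [T2Space X]
    [CompactSpace X] {F : Set X} (hF : IsClosed F) (x : X) :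
    IsClosed (connectedComponentIn F x) := by
  by_cases hx : x ∈ F
  · rw [connectedComponentIn_eq_image hx]
    haveI : CompactSpace F := isCompact_iff_compactSpace.mp hF.isCompact
    have hcc : IsClosed (connectedComponent (⟨x, hx⟩ : F)) := isClosed_connectedComponent
    exact (hcc.isCompact.image continuous_subtype_val).isClosed
  · rw [connectedComponentIn_eq_empty hx]; exact isClosed_empty

/-- Boundary bumping: in a compact connected Hausdorff space, if the connected component of a
point in a closed set avoids the frontier of that set, then the set is everything. -/
lemma eq_univ_of_connectedComponentIn_disjoint_frontier {X : Type*} [TopologicalSpace X]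
    [T2Space X] [CompactSpace X] [ConnectedSpace X] {F : Set X} (hF : IsClosed F) {x : X}
    (hx : x ∈ F) (hdisj : connectedComponentIn F x ∩ frontier F = ∅) : F = univ := by
  haveI : CompactSpace F := isCompact_iff_compactSpace.mp hF.isCompact
  set x' : F := ⟨x, hx⟩
  -- The component avoids the frontier, hence is inside the interior.
  have hsub : connectedComponentIn F x ⊆ interior F := by
    intro z hz
    have hzF : z ∈ F := connectedComponentIn_subset F x hz
    by_contra hzi
    have hmem : z ∈ connectedComponentIn F x ∩ frontier F :=
      ⟨hz, by rw [hF.frontier_eq]; exact ⟨hzF, hzi⟩⟩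
    rw [hdisj] at hmem
    exact hmem
  -- In the subspace F, the component of x' is contained in the open set U.
  set U : Set F := Subtype.val ⁻¹' interior F with hU
  have hUopen : IsOpen U := isOpen_interior.preimage continuous_subtype_val
  have hccU : connectedComponent x' ⊆ U := by
    intro z hz
    have : (z : X) ∈ connectedComponentIn F x := by
      rw [connectedComponentIn_eq_image hx]; exact ⟨z, hz, rfl⟩
    exact hsub this
  -- Find a clopen set between the component and U, using compactness.
  have hquasi : (⋂ Z : { Z : Set F // IsClopen Z ∧ x' ∈ Z }, (Z : Set F)) ⊆ U := by
    rw [← connectedComponent_eq_iInter_isClopen]; exact hccU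
  have hcompl : Uᶜ ⊆ ⋃ Z : { Z : Set F // IsClopen Z ∧ x' ∈ Z }, ((Z : Set F)ᶜ) := by
    intro z hz
    by_contra hzn
    simp only [mem_iUnion, mem_compl_iff, not_exists, not_not] at hzn
    exact hz (hquasi (mem_iInter.mpr hzn))
  obtain ⟨t, ht⟩ := (hUopen.isClosed_compl.isCompact).elim_finite_subcover
    (fun Z : { Z : Set F // IsClopen Z ∧ x' ∈ Z } => ((Z : Set F)ᶜ))
    (fun Z => isOpen_compl_iff.mpr Z.2.1.1) hcompl
  set Z₀ : Set F := ⋂ Z ∈ t, (Z : Set F) with hZ₀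
  have hZ₀clopen : IsClopen Z₀ := by
    apply Set.Finite.isClopen_biInter t.finite_toSet
    exact fun Z _ => Z.2.1
  have hxZ₀ : x' ∈ Z₀ := mem_iInter₂.mpr fun Z _ => Z.2.2
  have hZ₀U : Z₀ ⊆ U := by
    intro z hz
    by_contra hzU
    obtain ⟨Z, hZt, hzZ⟩ := mem_iUnion₂.mp (ht hzU)
    exact hzZ (mem_iInter₂.mp hz Z hZt)
  -- The image of Z₀ in X is clopen in X.
  obtain ⟨V, hVopen, hVeq⟩ := isOpen_induced_iff.mp hZ₀clopen.2
  have himg_eq : Subtype.val '' Z₀ = V ∩ F := by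
    rw [← hVeq, Subtype.image_preimage_coe, inter_comm]
  have himg_sub : Subtype.val '' Z₀ ⊆ interior F := by
    rintro _ ⟨z, hz, rfl⟩; exact hZ₀U hz
  have himg_open : IsOpen (Subtype.val '' Z₀) := by
    have : Subtype.val '' Z₀ = V ∩ interior F := by
      apply Subset.antisymm
      · exact subset_inter (himg_eq ▸ inter_subset_left) himg_sub
      · rw [himg_eq]; exact inter_subset_inter_right V interior_subset
    rw [this]; exact hVopen.inter isOpen_interior
  have himg_closed : IsClosed (Subtype.val '' Z₀) :=
    ((hZ₀clopen.1.isCompact).image continuous_subtype_val).isClosed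
  have himg_univ : Subtype.val '' Z₀ = univ :=
    IsClopen.eq_univ ⟨himg_closed, himg_open⟩ ⟨x, ⟨x', hxZ₀, rfl⟩⟩
  apply eq_univ_of_univ_subset
  rw [← himg_univ]
  rintro _ ⟨z, _, rfl⟩; exact z.2

/-- A compact connected metric space of finite one-dimensional Hausdorff
measure is locally connected, i.e. a Peano continuum. -/
theorem compact_connected_finite_H1_locallyConnected
    (K : Type*) [MetricSpace K] [MeasurableSpace K] [BorelSpace K]
    [CompactSpace K] [ConnectedSpace K]
    (h : μH[1] (Set.univ : Set K) < ⊤) :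
    LocallyConnectedSpace K := by
  rw [locallyConnectedSpace_iff_connected_subsets]
  intro x U hU
  obtain ⟨r, hr0, hrU⟩ := (Metric.nhds_basis_closedBall.mem_iff.mp hU)
  set F := closedBall x r with hFdef
  have hFclosed : IsClosed F := isClosed_closedBall
  have hxF : x ∈ F := mem_closedBall_self hr0.le
  by_cases hFu : F = univ
  · exact ⟨univ, Filter.univ_mem, isPreconnected_univ, hFu ▸ hrU⟩
  set C := connectedComponentIn F x with hCdef
  -- the family of components (of F) other than C meeting the small ball
  set 𝒞 : Set (Set K) := {D | ∃ y ∈ ball x (r / 2), D = connectedComponentIn F y ∧ D ≠ C}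
    with h𝒞
  have hball_sub : ball x (r / 2) ⊆ F := fun y hy =>
    mem_closedBall.mpr (le_of_lt (lt_of_lt_of_le hy (by linarith)))
  -- every such component has H¹ measure at least r/2
  have key : ∀ D ∈ 𝒞, ENNReal.ofReal (r / 2) ≤ μH[1] D := by
    rintro D ⟨y, hy, rfl, hne⟩
    have hyF : y ∈ F := hball_sub hy
    have hfr : connectedComponentIn F y ∩ frontier F ≠ ∅ := by
      intro hemp
      exact hFu (eq_univ_of_connectedComponentIn_disjoint_frontier hFclosed hyF hemp)
    obtain ⟨z, hzD, hzfr⟩ := nonempty_iff_ne_empty.mpr hfr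
    have hzs : z ∈ sphere x r := frontier_closedBall_subset_sphere hzfr
    have hdistyz : r / 2 ≤ dist y z := by
      have h1 : dist z x = r := hzs
      have h2 : dist x y < r / 2 := mem_ball'.mp hy
      have h3 := dist_triangle x y z
      have h4 : dist x z = dist z x := dist_comm x z
      linarith
    calc ENNReal.ofReal (r / 2) ≤ edist y z := by
          rw [edist_dist]; exact ENNReal.ofReal_le_ofReal hdistyz
      _ ≤ EMetric.diam (connectedComponentIn F y) :=
          EMetric.edist_le_diam_of_mem (mem_connectedComponentIn hyF) hzD
      _ ≤ μH[1] (connectedComponentIn F y) :=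
          ediam_le_hausdorffMeasure_one isPreconnected_connectedComponentIn
  -- elements of 𝒞 are closed and pairwise disjoint
  have hclosed : ∀ D ∈ 𝒞, IsClosed D := by
    rintro D ⟨y, _, rfl, -⟩
    exact isClosed_connectedComponentIn_of_isClosed hFclosed y
  have hdisj : 𝒞.Pairwise (Function.onFun Disjoint id) := by
    rintro D₁ ⟨y₁, _, rfl, -⟩ D₂ ⟨y₂, _, rfl, -⟩ hne
    refine Set.disjoint_left.mpr fun z hz₁ hz₂ => hne ?_
    rw [connectedComponentIn_eq hz₁, connectedComponentIn_eq hz₂]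
  -- 𝒞 is finite
  have hfin : 𝒞.Finite := by
    by_contra hinf
    have hinf' : 𝒞.Infinite := hinf
    obtain e := hinf'.natEmbedding
    have hpair : Pairwise (Function.onFun Disjoint fun n : ℕ => ((e n : 𝒞) : Set K)) := by
      intro n m hnm
      refine hdisj (e n).2 (e m).2 ?_
      intro hc
      exact hnm (e.injective (Subtype.ext hc))
    have hcalc : (⊤ : ℝ≥0∞) ≤ μH[1] (Set.univ : Set K) := by
      calc (⊤ : ℝ≥0∞) = ∑' _ : ℕ, ENNReal.ofReal (r / 2) :=
            (ENNReal.tsum_const_eq_top_of_ne_zero (by positivity)).symm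
        _ ≤ ∑' n : ℕ, μH[1] ((e n : 𝒞) : Set K) :=
            ENNReal.tsum_le_tsum fun n => key _ (e n).2
        _ = μH[1] (⋃ n : ℕ, ((e n : 𝒞) : Set K)) :=
            (measure_iUnion hpair fun n => (hclosed _ (e n).2).measurableSet).symm
        _ ≤ μH[1] (Set.univ : Set K) := measure_mono (subset_univ _)
    exact h.ne (top_le_iff.mp hcalc)
  -- C contains a neighborhood of x
  have hxnot : x ∉ ⋃₀ 𝒞 := by
    rintro ⟨D, ⟨y, _, rfl, hne⟩, hxD⟩
    exact hne ((connectedComponentIn_eq hxD).trans hCdef.symm)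
  have hsUclosed : IsClosed (⋃₀ 𝒞) := by
    rw [sUnion_eq_biUnion]; exact hfin.isClosed_biUnion hclosed
  have hnbhd : C ∈ nhds x := by
    have hVopen : IsOpen (ball x (r / 2) ∩ (⋃₀ 𝒞)ᶜ) :=
      isOpen_ball.inter hsUclosed.isOpen_compl
    have hxV : x ∈ ball x (r / 2) ∩ (⋃₀ 𝒞)ᶜ :=
      ⟨mem_ball_self (by positivity), hxnot⟩
    refine Filter.mem_of_superset (hVopen.mem_nhds hxV) ?_
    rintro y ⟨hy, hyn⟩
    have hyF : y ∈ F := hball_sub hy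
    by_cases hyC : connectedComponentIn F y = C
    · exact hyC ▸ mem_connectedComponentIn hyF
    · exact absurd ⟨connectedComponentIn F y, ⟨y, hy, rfl, hyC⟩,
        mem_connectedComponentIn hyF⟩ hyn
  exact ⟨C, hnbhd, isPreconnected_connectedComponentIn,
    (connectedComponentIn_subset F x).trans hrU⟩
end
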